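/- Let G be a finite graph in which every induced cycle is a square (induced 4-cycle) and the two-squares graph (a 6-cycle with one diagonal) does not embed as an induced subgraph. Then for any connected induced subgraph A of G and any vertex v, any two vertices of N(v) ∩ A have a common neighbour lying in A. -/

import Mathlib

/-- `G` has an induced cycle of length `k`: there are `k` distinct vertices
whose induced subgraph is exactly the `k`-cycle (no chords). -/
def HasInducedCycle {α : Type*} (G : SimpleGraph α) (k : ℕ) : Prop :=
  ∃ f : Fin k ↪ α, ∀ i j : Fin k,
    G.Adj (f i) (f j) ↔ ((i.val + 1) % k = j.val ∨ (j.val + 1) % k = i.val)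

/-- The two-squares graph: a 6-cycle `1 2 3 4 5 6 1` with the diagonal `3 6`
(0-indexed: edges 01,12,23,34,45,50 and chord 25). -/
def twoSquares : SimpleGraph (Fin 6) :=
  SimpleGraph.fromRel (fun i j =>
    (i = 0 ∧ j = 1) ∨ (i = 1 ∧ j = 2) ∨ (i = 2 ∧ j = 3) ∨ (i = 3 ∧ j = 4) ∨
    (i = 4 ∧ j = 5) ∨ (i = 5 ∧ j = 0) ∨ (i = 2 ∧ j = 5))

private lemma walk_dist_getVert_le' {V : Type*} {H : SimpleGraph V} (hc : H.Connected) :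
    ∀ {u v : V} (w : H.Walk u v) (i : ℕ), H.dist u (w.getVert i) ≤ i := by
  intro u v w
  induction w with
  | nil =>
      intro i
      rw [SimpleGraph.Walk.getVert_of_length_le _ (Nat.zero_le i)]
      simp [SimpleGraph.dist_self]
  | @cons a b c h q ih =>
      intro i
      cases i with
      | zero => simp
      | succ n =>
          have h1 : H.dist a b ≤ 1 := by
            have := SimpleGraph.dist_le (SimpleGraph.Walk.cons h SimpleGraph.Walk.nil)
            simpa using this
          have htri : H.dist a ((q.cons h).getVert (n+1)) ≤
              H.dist a b + H.dist b (q.getVert n) := by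
            rw [SimpleGraph.Walk.getVert_cons_succ]
            exact hc.dist_triangle
          calc H.dist a ((q.cons h).getVert (n+1))
              ≤ H.dist a b + H.dist b (q.getVert n) := htri
            _ ≤ 1 + n := Nat.add_le_add h1 (ih n)
            _ = n + 1 := Nat.add_comm 1 n

private lemma walk_dist_getVert_le {V : Type*} {H : SimpleGraph V}
    (hc : H.Connected) : ∀ {u v : V} (w : H.Walk u v) (i j : ℕ), i ≤ j →
      H.dist (w.getVert i) (w.getVert j) ≤ j - i := by
  intro u v w
  induction w with
  | nil =>
      intro i j _
      rw [SimpleGraph.Walk.getVert_of_length_le _ (Nat.zero_le i),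
        SimpleGraph.Walk.getVert_of_length_le _ (Nat.zero_le j)]
      simp [SimpleGraph.dist_self]
  | @cons a b c h q ih =>
      intro i j hij
      cases i with
      | zero =>
          rw [SimpleGraph.Walk.getVert_zero]
          simpa using walk_dist_getVert_le' hc (q.cons h) j
      | succ n =>
          cases j with
          | zero => omega
          | succ m =>
              rw [SimpleGraph.Walk.getVert_cons_succ, SimpleGraph.Walk.getVert_cons_succ]
              simpa using ih n m (by omega)

private instance : DecidableRel twoSquares.Adj := fun i j =>
  decidable_of_iff _ (SimpleGraph.fromRel_adj _ i j).symm

private lemma cycle_helper {α : Type*} {G : SimpleGraph α} {n : ℕ} (hn : 1 ≤ n)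
    (y : ℕ → α) (v : α)
    (hE1 : ∀ m, m < n → G.Adj (y m) (y (m+1)))
    (hE2 : ∀ m m', m + 2 ≤ m' → m' ≤ n → ¬ G.Adj (y m) (y m'))
    (hinj : ∀ m, m ≤ n → ∀ m', m' ≤ n → y m = y m' → m = m')
    (hv0 : G.Adj v (y 0)) (hvn : G.Adj v (y n))
    (hnot : ∀ m, 1 ≤ m → m < n → ¬ G.Adj v (y m))
    (hvne : ∀ m, m ≤ n → v ≠ y m) :
    HasInducedCycle G (n + 2) := by
  classical
  refine ⟨⟨fun i => if (i : ℕ) ≤ n then y i else v, ?_⟩, ?_⟩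
  · intro i j hxy
    have hi2 := i.isLt; have hj2 := j.isLt
    simp only at hxy
    split_ifs at hxy with hi hj hj
    · exact Fin.ext (hinj _ hi _ hj hxy)
    · exact absurd hxy.symm (hvne _ hi)
    · exact absurd hxy (hvne _ hj)
    · exact Fin.ext (by omega)
  · intro i j
    have hi2 := i.isLt; have hj2 := j.isLt
    show G.Adj (if (i:ℕ) ≤ n then y i else v) (if (j:ℕ) ≤ n then y j else v) ↔ _
    by_cases hi : (i : ℕ) ≤ n <;> by_cases hj : (j : ℕ) ≤ n
    · rw [if_pos hi, if_pos hj]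
      have m1 : ((i:ℕ) + 1) % (n+2) = (i:ℕ) + 1 := Nat.mod_eq_of_lt (by omega)
      have m2 : ((j:ℕ) + 1) % (n+2) = (j:ℕ) + 1 := Nat.mod_eq_of_lt (by omega)
      rw [m1, m2]
      constructor
      · intro h
        by_contra hc
        push_neg at hc
        have htri : (i:ℕ) = j ∨ (i:ℕ) + 2 ≤ j ∨ (j:ℕ) + 2 ≤ i := by omega
        rcases htri with he | he | he
        · exact h.ne (by rw [he])
        · exact hE2 _ _ he hj h
        · exact hE2 _ _ he hi h.symm
      · rintro (h | h)
        · have : (j:ℕ) = (i:ℕ) + 1 := by omega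
          rw [this]; exact hE1 _ (by omega)
        · have : (i:ℕ) = (j:ℕ) + 1 := by omega
          rw [this]; exact (hE1 _ (by omega)).symm
    · rw [if_pos hi, if_neg hj]
      have hjv : (j:ℕ) = n + 1 := by omega
      have m1 : ((i:ℕ) + 1) % (n+2) = (i:ℕ) + 1 := Nat.mod_eq_of_lt (by omega)
      have m2 : ((j:ℕ) + 1) % (n+2) = 0 := by rw [hjv]; simp
      rw [m1, m2]
      constructor
      · intro h
        by_contra hc
        push_neg at hc
        exact hnot _ (by omega) (by omega) h.symm
      · rintro (h | h)
        · have : (i:ℕ) = n := by omega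
          rw [this]; exact hvn.symm
        · have : (i:ℕ) = 0 := by omega
          rw [this]; exact hv0.symm
    · rw [if_neg hi, if_pos hj]
      have hiv : (i:ℕ) = n + 1 := by omega
      have m1 : ((i:ℕ) + 1) % (n+2) = 0 := by rw [hiv]; simp
      have m2 : ((j:ℕ) + 1) % (n+2) = (j:ℕ) + 1 := Nat.mod_eq_of_lt (by omega)
      rw [m1, m2]
      constructor
      · intro h
        by_contra hc
        push_neg at hc
        exact hnot _ (by omega) (by omega) h
      · rintro (h | h)
        · have : (j:ℕ) = 0 := by omega
          rw [this]; exact hv0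
        · have : (j:ℕ) = n := by omega
          rw [this]; exact hvn
    · rw [if_neg hi, if_neg hj]
      have hiv : (i:ℕ) = n + 1 := by omega
      have hjv : (j:ℕ) = n + 1 := by omega
      have m1 : ((i:ℕ) + 1) % (n+2) = 0 := by rw [hiv]; simp
      have m2 : ((j:ℕ) + 1) % (n+2) = 0 := by rw [hjv]; simp
      rw [m1, m2]
      simp only [SimpleGraph.irrefl, false_iff]
      omega

set_option maxHeartbeats 1000000 in
theorem common_neighbour_in_A {α : Type*} [Fintype α] (G : SimpleGraph α)
    (hsq : ∀ k, 3 ≤ k → k ≠ 4 → ¬ HasInducedCycle G k)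
    (hts : IsEmpty (twoSquares ↪g G))
    (A : Set α) (hA : (G.induce A).Connected) (v : α)
    (a₁ a₂ : α) (h₁ : a₁ ∈ A) (h₂ : a₂ ∈ A)
    (hv₁ : G.Adj v a₁) (hv₂ : G.Adj v a₂) (hne : a₁ ≠ a₂) :
    ∃ x ∈ A, G.Adj x a₁ ∧ G.Adj x a₂ := by
  classical
  set G' : SimpleGraph A := G.induce A with hG'def
  have hreach : G'.Reachable ⟨a₁, h₁⟩ ⟨a₂, h₂⟩ := hA.preconnected _ _
  obtain ⟨w, hw⟩ := hreach.exists_walk_length_eq_dist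
  set d : ℕ := G'.dist ⟨a₁, h₁⟩ ⟨a₂, h₂⟩ with hddef
  set X : ℕ → α := fun i => (w.getVert i : α) with hXdef
  have hmem : ∀ i, X i ∈ A := fun i => (w.getVert i).2
  have hX0 : X 0 = a₁ := by simp [hXdef]
  have hXd : ∀ i, d ≤ i → X i = a₂ := by
    intro i hi
    have h0 : w.getVert i = ⟨a₂, h₂⟩ := w.getVert_of_length_le (by omega)
    simp [hXdef, h0]
  have hadj_iff : ∀ i j, G'.Adj (w.getVert i) (w.getVert j) ↔ G.Adj (X i) (X j) := by
    intro i j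
    simp [hG'def, hXdef, SimpleGraph.comap_adj]
  have hlow : ∀ i j, i ≤ j → j ≤ d → j - i ≤ G'.dist (w.getVert i) (w.getVert j) := by
    intro i j hij hjd
    have t1 : G'.dist ⟨a₁, h₁⟩ (w.getVert i) ≤ i := by
      have := walk_dist_getVert_le hA w 0 i (Nat.zero_le i)
      simpa [SimpleGraph.Walk.getVert_zero] using this
    have t2 : G'.dist (w.getVert j) ⟨a₂, h₂⟩ ≤ d - j := by
      have h5 := walk_dist_getVert_le hA w j w.length (by omega)
      rw [SimpleGraph.Walk.getVert_length, hw] at h5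
      exact h5
    have t3 : G'.dist ⟨a₁, h₁⟩ ⟨a₂, h₂⟩ ≤
        G'.dist ⟨a₁, h₁⟩ (w.getVert i) + G'.dist (w.getVert i) ⟨a₂, h₂⟩ := hA.dist_triangle
    have t4 : G'.dist (w.getVert i) ⟨a₂, h₂⟩ ≤
        G'.dist (w.getVert i) (w.getVert j) + G'.dist (w.getVert j) ⟨a₂, h₂⟩ := hA.dist_triangle
    have t5 : G'.dist ⟨a₁, h₁⟩ ⟨a₂, h₂⟩ = d := hddef.symm
    omega
  have hE1 : ∀ i, i < d → G.Adj (X i) (X (i+1)) := fun i hi =>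
    (hadj_iff i (i+1)).1 (w.adj_getVert_succ (by omega))
  have hE2 : ∀ i j, i + 2 ≤ j → j ≤ d → ¬ G.Adj (X i) (X j) := by
    intro i j hij hjd hadj
    have h1 : G'.dist (w.getVert i) (w.getVert j) = 1 :=
      SimpleGraph.dist_eq_one_iff_adj.2 ((hadj_iff i j).2 hadj)
    have h2 := hlow i j (by omega) hjd
    omega
  have hkey : ∀ i j, i < j → j ≤ d → X i ≠ X j := by
    intro i j hij hjd h
    have h0 : w.getVert i = w.getVert j := Subtype.ext h
    have h2 := hlow i j (by omega) hjd
    rw [h0] at h2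
    simp [SimpleGraph.dist_self] at h2
    omega
  have hinj : ∀ i, i ≤ d → ∀ j, j ≤ d → X i = X j → i = j := by
    intro i hi j hj h
    rcases Nat.lt_trichotomy i j with hlt | he | hgt
    · exact absurd h (hkey i j hlt hj)
    · exact he
    · exact absurd h.symm (hkey j i hgt hi)
  have hd0 : d ≠ 0 := by
    intro h
    exact hne (by rw [← hX0, hXd 0 (by omega)])
  -- rule out d = 1 : a triangle
  have hd1 : d ≠ 1 := by
    intro h
    have hadj12 : G.Adj a₁ a₂ := by
      have := hE1 0 (by omega)
      rwa [hX0, hXd 1 (by omega)] at this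
    apply hsq 3 (by norm_num) (by norm_num)
    have := cycle_helper (G := G) (n := 1) le_rfl
      (fun m => if m = 0 then a₁ else a₂) v
      (by
        intro m hm
        have hm0 : m = 0 := by omega
        subst hm0
        simpa using hadj12)
      (by intro m m' h1 h2; omega)
      (by
        intro m hm m' hm' hh
        rcases Nat.le_one_iff_eq_zero_or_eq_one.mp hm with rfl | rfl <;>
          rcases Nat.le_one_iff_eq_zero_or_eq_one.mp hm' with rfl | rfl
        · rfl
        · exact absurd (show a₁ = a₂ by simpa using hh) hne
        · exact absurd (show a₂ = a₁ by simpa using hh).symm hne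
        · rfl)
      (by simpa using hv₁)
      (by simpa using hv₂)
      (by intro m h1 h2; omega)
      (by
        intro m hm
        rcases Nat.le_one_iff_eq_zero_or_eq_one.mp hm with rfl | rfl
        · simpa using hv₁.ne
        · simpa using hv₂.ne)
    simpa using this
  by_cases hd2 : d = 2
  · refine ⟨X 1, hmem 1, ?_, ?_⟩
    · have := hE1 0 (by omega)
      rw [hX0] at this
      exact this.symm
    · have := hE1 1 (by omega)
      rwa [hXd 2 (by omega)] at this
  exfalso
  have hd3 : 3 ≤ d := by omega
  have hvne : ∀ i, i ≤ d → v ≠ X i := by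
    intro i hid heq
    rcases Nat.eq_zero_or_pos i with h0 | hpos
    · subst h0
      rw [hX0] at heq
      exact G.loopless.irrefl a₁ (heq ▸ hv₁)
    by_cases hi1 : i = 1
    · subst hi1
      have h' : G.Adj (X 1) (X d) := by
        rw [← heq, hXd d le_rfl]; exact hv₂
      exact hE2 1 d (by omega) le_rfl h'
    by_cases hid' : i = d
    · subst hid'
      rw [hXd d le_rfl] at heq
      exact G.loopless.irrefl a₂ (heq ▸ hv₂)
    · have h' : G.Adj (X 0) (X i) := by
        have : G.Adj (X i) (X 0) := by rw [← heq, hX0]; exact hv₁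
        exact this.symm
      exact hE2 0 i (by omega) hid h'
  -- minimal index ≥ 1 adjacent to v
  have hpex : ∃ i, 1 ≤ i ∧ i ≤ d ∧ G.Adj v (X i) :=
    ⟨d, by omega, le_rfl, by rw [hXd d le_rfl]; exact hv₂⟩
  set i₀ := Nat.find hpex with hi₀def
  obtain ⟨hi₀1, hi₀d, hi₀adj⟩ := Nat.find_spec hpex
  have hi₀min : ∀ m, m < i₀ → ¬(1 ≤ m ∧ m ≤ d ∧ G.Adj v (X m)) := fun m hm =>
    Nat.find_min hpex hm
  have hcyc1 := cycle_helper (G := G) (n := i₀) hi₀1 X v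
    (fun m hm => hE1 m (by omega))
    (fun m m' h1 h2 => hE2 m m' h1 (by omega))
    (fun m hm m' hm' h => hinj m (by omega) m' (by omega) h)
    (by rw [hX0]; exact hv₁)
    hi₀adj
    (fun m h1 h2 hadj => hi₀min m h2 ⟨h1, by omega, hadj⟩)
    (fun m hm => hvne m (by omega))
  have hi₀2 : i₀ = 2 := by
    by_contra hc
    exact hsq (i₀ + 2) (by omega) (by omega) hcyc1
  have av2 : G.Adj v (X 2) := hi₀2 ▸ hi₀adj
  have nv1 : ¬ G.Adj v (X 1) := fun hadj =>
    hi₀min 1 (by omega) ⟨le_rfl, by omega, hadj⟩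
  -- minimal index ≥ 3 adjacent to v
  have hqex : ∃ j, 3 ≤ j ∧ j ≤ d ∧ G.Adj v (X j) :=
    ⟨d, hd3, le_rfl, by rw [hXd d le_rfl]; exact hv₂⟩
  set j₀ := Nat.find hqex with hj₀def
  obtain ⟨hj₀3, hj₀d, hj₀adj⟩ := Nat.find_spec hqex
  have hj₀min : ∀ m, m < j₀ → ¬(3 ≤ m ∧ m ≤ d ∧ G.Adj v (X m)) := fun m hm =>
    Nat.find_min hqex hm
  have hcyc2 := cycle_helper (G := G) (n := j₀ - 2) (by omega)
    (fun m => X (m + 2)) v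
    (fun m hm => hE1 (m + 2) (by omega))
    (fun m m' h1 h2 => hE2 (m + 2) (m' + 2) (by omega) (by omega))
    (fun m hm m' hm' h => by
      have := hinj (m + 2) (by omega) (m' + 2) (by omega) h
      omega)
    av2
    (by
      show G.Adj v (X (j₀ - 2 + 2))
      have h' : j₀ - 2 + 2 = j₀ := by omega
      rw [h']; exact hj₀adj)
    (fun m h1 h2 hadj => hj₀min (m + 2) (by omega) ⟨by omega, by omega, hadj⟩)
    (fun m hm => hvne (m + 2) (by omega))
  have hj₀4 : j₀ = 4 := by
    by_contra hc
    exact hsq (j₀ - 2 + 2) (by omega) (by omega) hcyc2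
  have hd4 : 4 ≤ d := by omega
  have av4 : G.Adj v (X 4) := hj₀4 ▸ hj₀adj
  have nv3 : ¬ G.Adj v (X 3) := fun hadj =>
    hj₀min 3 (by omega) ⟨le_rfl, by omega, hadj⟩
  have av0 : G.Adj v (X 0) := by rw [hX0]; exact hv₁
  -- edges and non-edges among X 0 .. X 4
  have e01 := hE1 0 (by omega)
  have e12 := hE1 1 (by omega)
  have e23 := hE1 2 (by omega)
  have e34 := hE1 3 (by omega)
  have n02 := hE2 0 2 (by omega) (by omega)
  have n03 := hE2 0 3 (by omega) (by omega)
  have n04 := hE2 0 4 (by omega) (by omega)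
  have n24 := hE2 2 4 (by omega) (by omega)
  have n13 := hE2 1 3 (by omega) (by omega)
  have n14 := hE2 1 4 (by omega) (by omega)
  have ne01 := hkey 0 1 (by omega) (by omega)
  have ne02 := hkey 0 2 (by omega) (by omega)
  have ne03 := hkey 0 3 (by omega) (by omega)
  have ne04 := hkey 0 4 (by omega) (by omega)
  have ne12 := hkey 1 2 (by omega) (by omega)
  have ne13 := hkey 1 3 (by omega) (by omega)
  have ne14 := hkey 1 4 (by omega) (by omega)
  have ne23 := hkey 2 3 (by omega) (by omega)
  have ne24 := hkey 2 4 (by omega) (by omega)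
  have ne34 := hkey 3 4 (by omega) (by omega)
  have nev0 := hvne 0 (by omega)
  have nev1 := hvne 1 (by omega)
  have nev2 := hvne 2 (by omega)
  have nev3 := hvne 3 (by omega)
  have nev4 := hvne 4 (by omega)
  refine hts.false ⟨⟨![X 0, X 1, X 2, X 3, X 4, v], ?_⟩, ?_⟩
  · intro a b hab
    fin_cases a <;> fin_cases b <;>
      simp only [Function.Embedding.coeFn_mk, Matrix.cons_val_zero, Matrix.cons_val_one, Matrix.head_cons,
        Matrix.cons_val_succ, Matrix.cons_val_fin_one, Fin.isValue] at hab ⊢ <;>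
      first
        | rfl
        | exact absurd hab (by assumption)
        | exact absurd hab.symm (by assumption)
  · intro a b
    fin_cases a <;> fin_cases b <;>
      simp only [Function.Embedding.coeFn_mk, Matrix.cons_val_zero, Matrix.cons_val_one, Matrix.head_cons,
        Matrix.cons_val_succ, Matrix.cons_val_fin_one, Fin.isValue] <;>
      first
        | exact iff_of_true (by assumption) (by decide)
        | exact iff_of_true (G.adj_symm (by assumption)) (by decide)
        | exact iff_of_false (by assumption) (by decide)
        | exact iff_of_false (fun h => absurd h.symm (by assumption)) (by decide)
        | exact iff_of_false (G.loopless.irrefl _) (by decide)
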